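/- If the metrics m_1, …, m_n are pairwise distinct, then f has a unique maximizer on C. -/

import Mathlib

set_option maxHeartbeats 1000000

lemma aux_log_diff_le {a b : ℝ} (ha : 0 < a) (hb : 0 < b) :
    Real.log b - Real.log a ≤ (b - a) / a := by
  have h := Real.log_le_sub_one_of_pos (show 0 < b / a from div_pos hb ha)
  rw [Real.log_div hb.ne' ha.ne'] at h
  have h2 : b / a - 1 = (b - a) / a := by field_simp
  linarith

lemma aux_sum_update (n : ℕ) (w x : Fin n → ℝ) (i : Fin n) (t : ℝ) :
    ∑ j, w j * Function.update x i t j = ∑ j, w j * x j + w i * (t - x i) := by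
  have h : ∑ j, (w j * Function.update x i t j - w j * x j)
      = w i * t - w i * x i := by
    rw [Finset.sum_eq_single i]
    · simp
    · intro j _ hj; simp [Function.update_of_ne hj]
    · simp
  rw [Finset.sum_sub_distrib] at h
  linarith

lemma aux_kkt (n : ℕ) (ω β lam S0 : ℝ) (hω : 0 < ω) (hβ : 0 < β)
    (hlam : 0 ≤ lam) (hS0 : 0 ≤ S0)
    (S ψ : Fin n → ℝ) (hS : ∀ i, 0 < S i) (hψ : ∀ i, 0 ≤ ψ i)
    (x : Fin n → ℝ) (hx : ∀ i, x i ∈ Set.Icc (0:ℝ) 1)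
    (hmax : ∀ y : Fin n → ℝ, (∀ i, y i ∈ Set.Icc (0:ℝ) 1) →
      ω * β * Real.log (1 + S0 + ∑ j, S j * y j) - ∑ j, (lam + β * ψ j) * y j ≤
      ω * β * Real.log (1 + S0 + ∑ j, S j * x j) - ∑ j, (lam + β * ψ j) * x j)
    (i : Fin n) :
    ((lam + β * ψ i) * (1 + S0 + ∑ j, S j * x j) < ω * β * S i → x i = 1) ∧
    (ω * β * S i < (lam + β * ψ i) * (1 + S0 + ∑ j, S j * x j) → x i = 0) := by
  set G := 1 + S0 + ∑ j, S j * x j with hG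
  set c := lam + β * ψ i with hc
  have hc0 : 0 ≤ c := by have := hψ i; nlinarith
  have hGsum : 0 ≤ ∑ j, S j * x j :=
    Finset.sum_nonneg fun j _ => mul_nonneg (hS j).le (hx j).1
  have hG1 : 1 ≤ G := by simp only [hG]; linarith
  have hGpos : 0 < G := by linarith
  have hSi := hS i
  constructor
  · intro hlt
    by_contra hne
    have hxi1 : x i < 1 := lt_of_le_of_ne (hx i).2 hne
    set D := ω * β * S i - c * G with hD
    have hDpos : 0 < D := by simp only [hD]; linarith
    set ε := min (1 - x i) (D / (c * S i + 1)) with hε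
    have hden : 0 < c * S i + 1 := by nlinarith
    have hεpos : 0 < ε := lt_min (by linarith) (div_pos hDpos hden)
    have hεle : ε ≤ 1 - x i := min_le_left _ _
    have hεle2 : ε ≤ D / (c * S i + 1) := min_le_right _ _
    set y := Function.update x i (x i + ε) with hy
    have hyC : ∀ j, y j ∈ Set.Icc (0:ℝ) 1 := by
      intro j
      by_cases hj : j = i
      · subst hj; simp only [hy, Function.update_self]
        exact ⟨by linarith [(hx j).1], by linarith⟩
      · simp only [hy, Function.update_of_ne hj]; exact hx j
    have hgy : 1 + S0 + ∑ j, S j * y j = G + S i * ε := by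
      simp only [hy, aux_sum_update, hG]; ring
    have hgypos : 0 < G + S i * ε := by nlinarith
    -- key: c * (G + S i * ε) < ω * β * S i
    have hkey : c * (G + S i * ε) < ω * β * S i := by
      have h1 : c * S i * ε ≤ c * S i * (D / (c * S i + 1)) := by
        apply mul_le_mul_of_nonneg_left hεle2 (by positivity)
      have h2 : c * S i * (D / (c * S i + 1)) < D := by
        rw [← mul_div_assoc, div_lt_iff₀ hden]
        nlinarith
      nlinarith
    -- log bound
    have hlog : S i * ε / (G + S i * ε) ≤
        Real.log (G + S i * ε) - Real.log G := by
      have := aux_log_diff_le hgypos hGpos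
      have h3 : (G - (G + S i * ε)) / (G + S i * ε) = -(S i * ε / (G + S i * ε)) := by
        field_simp
        ring
      linarith [h3 ▸ this]
    have hlin : ∑ j, (lam + β * ψ j) * y j = (∑ j, (lam + β * ψ j) * x j) + c * ε := by
      simp only [hy, aux_sum_update]; ring
    have hfy := hmax y hyC
    rw [hgy, hlin] at hfy
    -- derive contradiction: f y > f x
    have hmul : S i * ε ≤ (Real.log (G + S i * ε) - Real.log G) * (G + S i * ε) := by
      rw [div_le_iff₀ hgypos] at hlog; linarith
    nlinarith [mul_pos hεpos hgypos, mul_pos hω hβ]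
  · intro hlt
    by_contra hne
    have hxi0 : 0 < x i := lt_of_le_of_ne (hx i).1 (Ne.symm hne)
    set D := c * G - ω * β * S i with hD
    have hDpos : 0 < D := by simp only [hD]; linarith
    set ε := min (x i) (D / (c * S i + 1)) with hε
    have hden : 0 < c * S i + 1 := by nlinarith
    have hεpos : 0 < ε := lt_min hxi0 (div_pos hDpos hden)
    have hεle : ε ≤ x i := min_le_left _ _
    have hεle2 : ε ≤ D / (c * S i + 1) := min_le_right _ _
    set y := Function.update x i (x i - ε) with hy
    have hyC : ∀ j, y j ∈ Set.Icc (0:ℝ) 1 := by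
      intro j
      by_cases hj : j = i
      · subst hj; simp only [hy, Function.update_self]
        exact ⟨by linarith, by linarith [(hx j).2]⟩
      · simp only [hy, Function.update_of_ne hj]; exact hx j
    have hgy : 1 + S0 + ∑ j, S j * y j = G - S i * ε := by
      simp only [hy, aux_sum_update, hG]; ring
    have hsum' : 0 ≤ ∑ j, S j * y j :=
      Finset.sum_nonneg fun j _ => mul_nonneg (hS j).le (hyC j).1
    have hgypos : 0 < G - S i * ε := by
      have : (1:ℝ) ≤ G - S i * ε := by rw [← hgy]; linarith
      linarith
    have hkey : ω * β * S i < c * (G - S i * ε) := by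
      have h1 : c * S i * ε ≤ c * S i * (D / (c * S i + 1)) := by
        apply mul_le_mul_of_nonneg_left hεle2 (by positivity)
      have h2 : c * S i * (D / (c * S i + 1)) < D := by
        rw [← mul_div_assoc, div_lt_iff₀ hden]
        nlinarith
      nlinarith
    have hlog : Real.log G - Real.log (G - S i * ε) ≤ S i * ε / (G - S i * ε) := by
      have := aux_log_diff_le hgypos hGpos
      have h3 : (G - (G - S i * ε)) / (G - S i * ε) = S i * ε / (G - S i * ε) := by
        congr 1; ring
      linarith [h3 ▸ this]
    have hlin : ∑ j, (lam + β * ψ j) * y j = (∑ j, (lam + β * ψ j) * x j) - c * ε := by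
      simp only [hy, aux_sum_update]; ring
    have hfy := hmax y hyC
    rw [hgy, hlin] at hfy
    have hmul : (Real.log G - Real.log (G - S i * ε)) * (G - S i * ε) ≤ S i * ε := by
      rw [le_div_iff₀ hgypos] at hlog
      linarith
    nlinarith [mul_pos hεpos hgypos, mul_pos hω hβ]

theorem unique_maximizer
    (n : ℕ) (hn : 1 ≤ n)
    (ω β lam S0 : ℝ) (hω : 0 < ω) (hβ : 0 < β) (hlam : 0 ≤ lam) (hS0 : 0 ≤ S0)
    (S ψ : Fin n → ℝ) (hS : ∀ i, 0 < S i) (hψ : ∀ i, 0 ≤ ψ i)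
    (g f : (Fin n → ℝ) → ℝ)
    (hg : ∀ x, g x = 1 + S0 + ∑ i, S i * x i)
    (hf : ∀ x, f x = ω * β * Real.log (g x) - ∑ i, (lam + β * ψ i) * x i)
    (m : Fin n → ℝ) (hm : ∀ i, m i = (β * ψ i + lam) / (ω * β * S i))
    (hdistinct : ∀ i j : Fin n, i ≠ j → m i ≠ m j) :
    ∃! x : Fin n → ℝ, (∀ i, x i ∈ Set.Icc (0:ℝ) 1) ∧
      ∀ y : Fin n → ℝ, (∀ i, y i ∈ Set.Icc (0:ℝ) 1) → f y ≤ f x := by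
  have hωβ : 0 < ω * β := mul_pos hω hβ
  have hsum_nn : ∀ x : Fin n → ℝ, (∀ i, x i ∈ Set.Icc (0:ℝ) 1) →
      0 ≤ ∑ i, S i * x i := fun x hx =>
    Finset.sum_nonneg fun i _ => mul_nonneg (hS i).le (hx i).1
  have hgpos : ∀ x : Fin n → ℝ, (∀ i, x i ∈ Set.Icc (0:ℝ) 1) →
      (0:ℝ) < 1 + S0 + ∑ i, S i * x i := by
    intro x hx; have := hsum_nn x hx; linarith
  -- Existence
  have hCs : {x : Fin n → ℝ | ∀ i, x i ∈ Set.Icc (0:ℝ) 1} = Set.Icc 0 1 := by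
    ext x; simp [Set.mem_Icc, Pi.le_def, forall_and]
  have hcpt : IsCompact {x : Fin n → ℝ | ∀ i, x i ∈ Set.Icc (0:ℝ) 1} := by
    rw [hCs]; exact isCompact_Icc
  have hne : ({x : Fin n → ℝ | ∀ i, x i ∈ Set.Icc (0:ℝ) 1}).Nonempty := by
    exact ⟨0, fun i => by simp⟩
  have hgc : Continuous (fun x : Fin n → ℝ => 1 + S0 + ∑ i, S i * x i) :=
    continuous_const.add (continuous_finset_sum _ fun i _ =>
      continuous_const.mul (continuous_apply i))
  have hfeq : f = fun x : Fin n → ℝ =>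
      ω * β * Real.log (1 + S0 + ∑ i, S i * x i) - ∑ i, (lam + β * ψ i) * x i := by
    funext x; rw [hf x, hg x]
  have hcont : ContinuousOn f {x : Fin n → ℝ | ∀ i, x i ∈ Set.Icc (0:ℝ) 1} := by
    rw [hfeq]
    apply ContinuousOn.sub
    · exact continuousOn_const.mul
        (hgc.continuousOn.log fun x hx => (hgpos x hx).ne')
    · exact (continuous_finset_sum _ fun i _ =>
        continuous_const.mul (continuous_apply i)).continuousOn
  obtain ⟨x, hxC, hxmax⟩ := hcpt.exists_isMaxOn hne hcont
  have hxmax' : ∀ y : Fin n → ℝ, (∀ i, y i ∈ Set.Icc (0:ℝ) 1) → f y ≤ f x :=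
    fun y hy => hxmax hy
  -- Uniqueness
  have huniq : ∀ a b : Fin n → ℝ,
      (∀ i, a i ∈ Set.Icc (0:ℝ) 1) → (∀ i, b i ∈ Set.Icc (0:ℝ) 1) →
      (∀ y : Fin n → ℝ, (∀ i, y i ∈ Set.Icc (0:ℝ) 1) → f y ≤ f a) →
      (∀ y : Fin n → ℝ, (∀ i, y i ∈ Set.Icc (0:ℝ) 1) → f y ≤ f b) →
      a = b := by
    intro a b haC hbC hamax hbmax
    have hfab : f a = f b := le_antisymm (hbmax a haC) (hamax b hbC)
    have hga : 0 < 1 + S0 + ∑ i, S i * a i := hgpos a haC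
    have hgb : 0 < 1 + S0 + ∑ i, S i * b i := hgpos b hbC
    -- Step 1: equal g values
    have hsums : ∑ i, S i * a i = ∑ i, S i * b i := by
      by_contra hneq
      set z : Fin n → ℝ := fun i => (a i + b i) / 2 with hz
      have hzC : ∀ i, z i ∈ Set.Icc (0:ℝ) 1 := by
        intro i
        have h1 := haC i; have h2 := hbC i
        simp only [hz, Set.mem_Icc] at *
        constructor <;> [linarith [h1.1, h2.1]; linarith [h1.2, h2.2]]
      have hzsum : ∑ i, S i * z i = ((∑ i, S i * a i) + ∑ i, S i * b i) / 2 := by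
        rw [← Finset.sum_add_distrib, Finset.sum_div]
        exact Finset.sum_congr rfl fun i _ => by simp only [hz]; ring
      have hzlin : ∑ i, (lam + β * ψ i) * z i =
          ((∑ i, (lam + β * ψ i) * a i) + ∑ i, (lam + β * ψ i) * b i) / 2 := by
        rw [← Finset.sum_add_distrib, Finset.sum_div]
        exact Finset.sum_congr rfl fun i _ => by simp only [hz]; ring
      have hgane : (1 + S0 + ∑ i, S i * a i) ≠ (1 + S0 + ∑ i, S i * b i) := by
        intro h; exact hneq (by linarith)
      have hconc := strictConcaveOn_log_Ioi.2 (Set.mem_Ioi.2 hga) (Set.mem_Ioi.2 hgb)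
        hgane (by norm_num : (0:ℝ) < 1/2) (by norm_num : (0:ℝ) < 1/2) (by norm_num)
      simp only [smul_eq_mul] at hconc
      have hmid : (1:ℝ)/2 * (1 + S0 + ∑ i, S i * a i) + 1/2 * (1 + S0 + ∑ i, S i * b i)
          = 1 + S0 + ∑ i, S i * z i := by rw [hzsum]; ring
      rw [hmid] at hconc
      have hzle := hamax z hzC
      rw [hf z, hf a, hg z, hg a] at hzle
      have hfb := hfab
      rw [hf a, hf b, hg a, hg b] at hfb
      nlinarith [hzle, hconc, hzlin, hfb]
    -- Step 2: KKT at a and b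
    have hamax' : ∀ y : Fin n → ℝ, (∀ i, y i ∈ Set.Icc (0:ℝ) 1) →
        ω * β * Real.log (1 + S0 + ∑ j, S j * y j) - ∑ j, (lam + β * ψ j) * y j ≤
        ω * β * Real.log (1 + S0 + ∑ j, S j * a j) - ∑ j, (lam + β * ψ j) * a j := by
      intro y hy; have := hamax y hy; rwa [hf y, hf a, hg y, hg a] at this
    have hbmax' : ∀ y : Fin n → ℝ, (∀ i, y i ∈ Set.Icc (0:ℝ) 1) →
        ω * β * Real.log (1 + S0 + ∑ j, S j * y j) - ∑ j, (lam + β * ψ j) * y j ≤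
        ω * β * Real.log (1 + S0 + ∑ j, S j * b j) - ∑ j, (lam + β * ψ j) * b j := by
      intro y hy; have := hbmax y hy; rwa [hf y, hf b, hg y, hg b] at this
    have kktA := fun i => aux_kkt n ω β lam S0 hω hβ hlam hS0 S ψ hS hψ a haC hamax' i
    have kktB := fun i => aux_kkt n ω β lam S0 hω hβ hlam hS0 S ψ hS hψ b hbC hbmax' i
    set G := 1 + S0 + ∑ j, S j * a j with hG
    have hGb : 1 + S0 + ∑ j, S j * b j = G := by rw [hG, hsums]
    rw [hGb] at kktB
    have hmval : ∀ k, (lam + β * ψ k) * G = ω * β * S k → m k = 1 / G := by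
      intro k hk
      rw [hm k]
      have hSk := hS k
      rw [div_eq_div_iff (by positivity) hga.ne']
      rw [hG] at hk ⊢
      linarith [hk]
    funext i
    rcases lt_trichotomy ((lam + β * ψ i) * G) (ω * β * S i) with h | h | h
    · rw [(kktA i).1 h, (kktB i).1 h]
    · -- degenerate index: all others are forced
      have hforced : ∀ j, j ≠ i → a j = b j := by
        intro j hj
        rcases lt_trichotomy ((lam + β * ψ j) * G) (ω * β * S j) with h' | h' | h'
        · rw [(kktA j).1 h', (kktB j).1 h']
        · exact absurd ((hmval j h').trans (hmval i h).symm) (hdistinct j i hj)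
        · rw [(kktA j).2 h', (kktB j).2 h']
      have hsingle : ∑ j, (S j * a j - S j * b j) = S i * a i - S i * b i := by
        apply Finset.sum_eq_single_of_mem i (Finset.mem_univ i)
        intro j _ hj; rw [hforced j hj]; ring
      rw [Finset.sum_sub_distrib] at hsingle
      have : S i * a i = S i * b i := by linarith [hsums]
      exact mul_left_cancel₀ (hS i).ne' this
    · rw [(kktA i).2 h, (kktB i).2 h]
  exact ⟨x, ⟨hxC, hxmax'⟩, fun y hy => huniq y x hy.1 hxC hy.2 hxmax'⟩
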